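/- Let P be a probability distribution on finite V and let Q* be the pooled distribution defined by: Q*(t) = αr for t ∈ C ∪ {t*} and Q*(t) = αP(t) for t ∈ U := V \ (C ∪ {t*}), where r = (P(t*) · ∏_{t∈C} P(t))^{1/(|C|+1)}, Z = (|C|+1)r + Σ_{t∈U} P(t), and α = 1/Z. Then D_KL(Q* ‖ P) = log α = −log Z. -/

import Mathlib

/-- KL divergence of the pooled distribution Q* from P equals log α = −log Z. -/
theorem kl_pooled_eq_log_alpha {V : Type*} [Fintype V] [DecidableEq V]
    (P : V → ℝ) (hPpos : ∀ t, 0 < P t) (hPsum : ∑ t, P t = 1)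
    (tstar : V) (C : Finset V) (hC : tstar ∉ C)
    (r Z α : ℝ)
    (hr : r = (P tstar * ∏ t ∈ C, P t) ^ ((1 : ℝ) / (C.card + 1)))
    (hZ : Z = (C.card + 1 : ℝ) * r + ∑ t ∈ Finset.univ \ insert tstar C, P t)
    (hα : α = 1 / Z)
    (Qstar : V → ℝ)
    (hQstar : ∀ t, Qstar t = if t ∈ insert tstar C then α * r else α * P t) :
    (∑ t, Qstar t * Real.log (Qstar t / P t)) = Real.log α ∧
    Real.log α = - Real.log Z := by
  set S := insert tstar C with hS
  have hcard : (S.card : ℝ) = (C.card : ℝ) + 1 := by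
    rw [hS, Finset.card_insert_of_notMem hC]; push_cast; ring
  have hprodpos : 0 < ∏ t ∈ S, P t := Finset.prod_pos fun t _ => hPpos t
  have hr' : r = (∏ t ∈ S, P t) ^ ((1 : ℝ) / (C.card + 1)) := by
    rw [hr, hS, Finset.prod_insert hC]
  have hrpos : 0 < r := hr' ▸ Real.rpow_pos_of_pos hprodpos _
  have hsumU : 0 ≤ ∑ t ∈ Finset.univ \ S, P t :=
    Finset.sum_nonneg fun t _ => (hPpos t).le
  have hZpos : 0 < Z := by
    have h1 : (0:ℝ) < ((C.card : ℝ) + 1) * r := by positivity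
    rw [hZ]; linarith
  have hαpos : 0 < α := by rw [hα]; positivity
  have hlogr : ((C.card : ℝ) + 1) * Real.log r = ∑ t ∈ S, Real.log (P t) := by
    rw [hr', Real.log_rpow hprodpos, Real.log_prod fun t _ => (hPpos t).ne']
    field_simp
  have hsum0 : ∑ t ∈ S, (Real.log r - Real.log (P t)) = 0 := by
    rw [Finset.sum_sub_distrib, Finset.sum_const, nsmul_eq_mul, hcard]
    linarith
  have hαZ : α * Z = 1 := by rw [hα]; field_simp
  have key : ∑ t, Qstar t * Real.log (Qstar t / P t)
      = ∑ t ∈ S, (α * r) * (Real.log α + (Real.log r - Real.log (P t)))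
        + ∑ t ∈ Finset.univ \ S, (α * P t) * Real.log α := by
    rw [← Finset.sum_sdiff (Finset.subset_univ S), add_comm]
    congr 1
    · refine Finset.sum_congr rfl fun t ht => ?_
      rw [hQstar t, if_pos ht, Real.log_div (by positivity) (hPpos t).ne',
        Real.log_mul hαpos.ne' hrpos.ne']
      ring
    · refine Finset.sum_congr rfl fun t ht => ?_
      rw [hQstar t, if_neg (Finset.mem_sdiff.mp ht).2]
      rw [mul_div_assoc, div_self (hPpos t).ne', mul_one]
  have h1 : ∑ t ∈ S, (α * r) * (Real.log α + (Real.log r - Real.log (P t)))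
      = α * r * (((C.card : ℝ) + 1) * Real.log α) := by
    rw [← Finset.mul_sum, Finset.sum_add_distrib, hsum0, Finset.sum_const,
      nsmul_eq_mul, hcard]
    ring
  have h2 : ∑ t ∈ Finset.univ \ S, (α * P t) * Real.log α
      = α * (∑ t ∈ Finset.univ \ S, P t) * Real.log α := by
    rw [← Finset.sum_mul, ← Finset.mul_sum]
  have hmain : ∑ t, Qstar t * Real.log (Qstar t / P t) = Real.log α := by
    rw [key, h1, h2]
    have : α * r * (((C.card : ℝ) + 1) * Real.log α)
        + α * (∑ t ∈ Finset.univ \ S, P t) * Real.log α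
        = (α * Z) * Real.log α := by rw [hZ]; ring
    rw [this, hαZ, one_mul]
  exact ⟨hmain, by rw [hα, one_div, Real.log_inv]⟩
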